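/- Fix n ≥ 3, let G = ℤ/2ℤ = {1, a}, and let Γ be the n-Cayley digraph on G × ℤ/nℤ with T_{i,i+1} = T_{i+1,i} = {1} for i ≠ 1, T_{1,2} = T_{2,1} = {a}, and all other connection sets empty. Then there is a unique undirected path of length n − 1 in Γ from (1,1) to (1,2), namely (1,1), (1,0), (1,n−1), (1,n−2), …, (1,3), (1,2), while there is no undirected path of length n − 1 from (1,2) to (a,1). -/

import Mathlib

namespace PDR

/-- `σ` is an automorphism of the digraph `D`. -/
def IsDigraphAut {V : Type*} (D : Digraph V) (σ : Equiv.Perm V) : Prop :=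
  ∀ u v : V, D.Adj (σ u) (σ v) ↔ D.Adj u v

/-- The automorphism group of a digraph, as a subgroup of the symmetric group. -/
def digraphAut {V : Type*} (D : Digraph V) : Subgroup (Equiv.Perm V) where
  carrier := {σ | IsDigraphAut D σ}
  one_mem' := by intro u v; simp
  mul_mem' := by
    intro σ τ hσ hτ u v
    simpa [Equiv.Perm.mul_apply] using (hσ (τ u) (τ v)).trans (hτ u v)
  inv_mem' := by
    intro σ hσ u v
    simpa using (hσ (σ⁻¹ u) (σ⁻¹ v)).symm

/-- A digraph is regular if all vertices have the same out-valency and in-valency. -/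
def IsRegularDigraph {V : Type*} (D : Digraph V) : Prop :=
  ∃ d : ℕ, ∀ v : V, {u | D.Adj v u}.ncard = d ∧ {u | D.Adj u v}.ncard = d

/-- `D` is an `n`-partite digraphical representation of `G`: `D` is regular,
`Aut(D) ≅ G`, `Aut(D)` is semiregular with exactly `n` orbits, and each orbit
induces an empty sub-digraph. -/
def IsNPDR (G : Type*) [Group G] (n : ℕ) {V : Type*} (D : Digraph V) : Prop :=
  IsRegularDigraph D ∧
  Nonempty (G ≃* digraphAut D) ∧
  (∀ σ ∈ digraphAut D, ∀ v : V, σ v = v → σ = 1) ∧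
  (∃ f : V → Fin n, Function.Surjective f ∧
     ∀ u v : V, f u = f v ↔ ∃ σ ∈ digraphAut D, σ u = v) ∧
  (∀ u v : V, (∃ σ ∈ digraphAut D, σ u = v) → ¬ D.Adj u v)

/-- The `n`-Cayley digraph of `G` with connection sets `T i j`:
arcs `(g,i) → (t*g, j)` for `t ∈ T i j`. -/
def nCay (G : Type*) [Group G] (n : ℕ) (T : ZMod n → ZMod n → Set G) :
    Digraph (G × ZMod n) where
  Adj p q := q.1 * p.1⁻¹ ∈ T p.2 q.2

/-- Right translation `(x, i) ↦ (x·g, i)`. -/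
def rtransl (G : Type*) [Group G] (n : ℕ) (g : G) : Equiv.Perm (G × ZMod n) :=
  (Equiv.mulRight g).prodCongr (Equiv.refl (ZMod n))


/-- An undirected path with `k+1` vertices (length `k`) in a digraph: distinct
vertices, consecutive ones joined by an arc in at least one direction. -/
def IsUndirPath {V : Type} (D : Digraph V) {k : ℕ} (p : Fin (k + 1) → V) : Prop :=
  Function.Injective p ∧
  ∀ i : Fin k, D.Adj (p i.castSucc) (p i.succ) ∨ D.Adj (p i.succ) (p i.castSucc)

/-- The group `ℤ/2ℤ` (written multiplicatively) and its generator. -/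
abbrev GZ2 := Multiplicative (ZMod 2)
def aZ2 : GZ2 := Multiplicative.ofAdd 1

/-- Connection sets: `T i (i+1) = T (i+1) i = {1}` for `i ≠ 1`,
`T 1 2 = T 2 1 = {a}`, all others empty. -/
def T4 (n : ℕ) : ZMod n → ZMod n → Set GZ2 := fun i j =>
  if (j = i + 1 ∧ i ≠ 1) ∨ (i = j + 1 ∧ j ≠ 1) then {1}
  else if (i = 1 ∧ j = 2) ∨ (i = 2 ∧ j = 1) then {aZ2}
  else ∅

def phi (n : ℕ) (v : GZ2 × ZMod n) : ZMod (2*n) :=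
  (((1 - v.2).val + (if v.1 = 1 then 0 else n) : ℕ) : ZMod (2*n))

lemma phi_val (n : ℕ) (hn : 3 ≤ n) (v : GZ2 × ZMod n) :
    (phi n v).val = (1 - v.2).val + (if v.1 = 1 then 0 else n) := by
  haveI : NeZero n := ⟨by omega⟩
  haveI : NeZero (2*n) := ⟨by omega⟩
  have h1 : (1 - v.2).val < n := ZMod.val_lt _
  exact ZMod.val_cast_of_lt (by split <;> omega)

lemma phi_inj (n : ℕ) (hn : 3 ≤ n) : Function.Injective (phi n) := by
  haveI : NeZero n := ⟨by omega⟩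
  rintro ⟨g, i⟩ ⟨h, j⟩ he
  have hv := congrArg ZMod.val he
  rw [phi_val n hn, phi_val n hn] at hv
  simp only at hv
  have h1 : (1 - i).val < n := ZMod.val_lt _
  have h2 : (1 - j).val < n := ZMod.val_lt _
  have hgh : g = h := by
    rcases (by decide : ∀ g : GZ2, g = 1 ∨ g = aZ2) g with rfl | rfl <;>
      rcases (by decide : ∀ g : GZ2, g = 1 ∨ g = aZ2) h with rfl | rfl
    · rfl
    · rw [if_pos rfl, if_neg (by decide)] at hv; omega
    · rw [if_neg (by decide), if_pos rfl] at hv; omega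
    · rfl
  subst hgh
  have hval : (1 - i).val = (1 - j).val := by omega
  have h3 : (1 - i) = (1 - j) := ZMod.val_injective n hval
  have : i = j := by linear_combination -h3
  exact Prod.ext rfl this

lemma cycle_aux {m k : ℕ} (p : Fin (k+1) → ZMod m) (hinj : Function.Injective p)
    (hstep : ∀ i : Fin k, p i.succ = p i.castSucc + 1 ∨ p i.castSucc = p i.succ + 1)
    (hk : 1 ≤ k) (hfirst : p ⟨1, by omega⟩ = p 0 + 1) :
    ∀ j : ℕ, (hj : j ≤ k) → p ⟨j, by omega⟩ = p 0 + (j : ZMod m) := by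
  intro j
  induction j using Nat.strong_induction_on with
  | _ j ih =>
    intro hj
    match j with
    | 0 => simp
    | 1 => simpa using hfirst
    | (s+2) =>
      have hs1 : p ⟨s+1, by omega⟩ = p 0 + ((s+1 : ℕ) : ZMod m) := ih (s+1) (by omega) (by omega)
      have hs0 : p ⟨s, by omega⟩ = p 0 + ((s : ℕ) : ZMod m) := ih s (by omega) (by omega)
      rcases hstep ⟨s+1, by omega⟩ with h | h
      · have : p ⟨s+2, by omega⟩ = p ⟨s+1, by omega⟩ + 1 := h
        rw [this, hs1]; push_cast; ring
      · have h2 : p ⟨s+1, by omega⟩ = p ⟨s+2, by omega⟩ + 1 := h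
        exfalso
        have : p ⟨s+2, by omega⟩ = p ⟨s, by omega⟩ := by
          have : p ⟨s+2, by omega⟩ = p ⟨s+1, by omega⟩ - 1 := by
            rw [h2]; ring
          rw [this, hs1, hs0]; push_cast; ring
        have := hinj this
        simp [Fin.ext_iff] at this

lemma cycle_path {m k : ℕ} (p : Fin (k+1) → ZMod m) (hinj : Function.Injective p)
    (hstep : ∀ i : Fin k, p i.succ = p i.castSucc + 1 ∨ p i.castSucc = p i.succ + 1) :
    (∀ j : Fin (k+1), p j = p 0 + (j.val : ZMod m)) ∨
    (∀ j : Fin (k+1), p j = p 0 - (j.val : ZMod m)) := by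
  rcases Nat.eq_zero_or_pos k with rfl | hk
  · left; intro j
    have : j = 0 := Fin.ext (by omega)
    simp [this]
  · rcases hstep ⟨0, hk⟩ with h | h
    · left; intro j
      have := cycle_aux p hinj hstep hk (by simpa using h) j.val (by omega)
      simpa using this
    · right
      have hneg : ∀ i : Fin k, (-p ·) i.succ = (-p ·) i.castSucc + 1 ∨
          (-p ·) i.castSucc = (-p ·) i.succ + 1 := by
        intro i
        rcases hstep i with h' | h'
        · right; simp only; rw [h']; ring
        · left; simp only; rw [h']; ring
      have hinj' : Function.Injective (-p ·) := fun a b hab => hinj (by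
        have : - - p a = - - p b := congrArg Neg.neg hab
        simpa using this)
      intro j
      have := cycle_aux (-p ·) hinj' hneg hk (by
        have : p ⟨0, by omega⟩ = p ⟨1, by omega⟩ + 1 := by
          exact h
        rw [show ((0 : Fin (k+1))) = ⟨0, by omega⟩ from rfl, this]; ring) j.val (by omega)
      have h2 : -p j = -p 0 + (j.val : ZMod m) := by convert this using 2
      linear_combination -h2

lemma val_sub_one (n : ℕ) (hn : 3 ≤ n) (x : ZMod n) (hx : x ≠ 0) :
    (((x - 1).val : ℕ) : ZMod (2*n)) = ((x.val : ℕ) : ZMod (2*n)) - 1 := by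
  haveI : NeZero n := ⟨by omega⟩
  have h1 : 1 ≤ x.val := Nat.one_le_iff_ne_zero.mpr (by
    simpa [ZMod.val_eq_zero] using hx)
  have hx2 : x - 1 = ((x.val - 1 : ℕ) : ZMod n) := by
    push_cast [Nat.cast_sub h1]
    rw [ZMod.natCast_val, ZMod.cast_id]
  rw [hx2, ZMod.val_cast_of_lt (by have := ZMod.val_lt x; omega)]
  push_cast [Nat.cast_sub h1]
  ring

lemma val_neg_one (n : ℕ) (hn : 3 ≤ n) : (-1 : ZMod n).val = n - 1 := by
  haveI : NeZero n := ⟨by omega⟩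
  have : (-1 : ZMod n) = ((n - 1 : ℕ) : ZMod n) := by
    push_cast [Nat.cast_sub (by omega : 1 ≤ n)]
    simp
  rw [this, ZMod.val_cast_of_lt (by omega)]

lemma adj_phi (n : ℕ) (hn : 3 ≤ n) (u v : GZ2 × ZMod n)
    (h : (nCay GZ2 n (T4 n)).Adj u v) :
    phi n v = phi n u + 1 ∨ phi n u = phi n v + 1 := by
  haveI : NeZero n := ⟨by omega⟩
  haveI : NeZero (2*n) := ⟨by omega⟩
  obtain ⟨g, i⟩ := u
  obtain ⟨h2, j⟩ := v
  have hmem : h2 * g⁻¹ ∈ T4 n i j := h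
  unfold T4 at hmem
  split at hmem
  · -- T = {1}: h2 = g
    rename_i hc
    have hg : h2 = g := by
      exact mul_inv_eq_one.mp hmem
    subst hg
    simp only [phi]
    push_cast
    rcases hc with ⟨hji, hi⟩ | ⟨hij, hj⟩
    · right
      have hx : (1 - i) ≠ 0 := by
        intro h0
        exact hi (by linear_combination -h0)
      have key := val_sub_one n hn (1 - i) hx
      have : (1 : ZMod n) - j = (1 - i) - 1 := by rw [hji]; ring
      rw [this, key]
      ring
    · left
      have hx : (1 - j) ≠ 0 := by
        intro h0
        exact hj (by linear_combination -h0)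
      have key := val_sub_one n hn (1 - j) hx
      have : (1 : ZMod n) - i = (1 - j) - 1 := by rw [hij]; ring
      rw [this, key]
      ring
  · split at hmem
    · -- T = {aZ2}: h2 = aZ2 * g
      rename_i hc
      have hg : h2 = aZ2 * g := by
        have : h2 * g⁻¹ = aZ2 := hmem
        group at this
        rw [← this]; group
      subst hg
      have hcastn : ((n : ℕ) : ZMod (2*n)) + ((n : ℕ) : ZMod (2*n)) = 0 := by
        have : (((2*n : ℕ)) : ZMod (2*n)) = 0 := ZMod.natCast_self _
        push_cast at this
        linear_combination this
      have hone : ((1 : ZMod n) - 1) = 0 := by ring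
      have hval0 : ((1 : ZMod n) - 1).val = 0 := by rw [hone]; exact ZMod.val_zero
      have hnm : (((n-1 : ℕ)) : ZMod (2*n)) + 1 = ((n : ℕ) : ZMod (2*n)) := by
        push_cast [Nat.cast_sub (by omega : 1 ≤ n)]
        ring
      rcases hc with ⟨hi1, hj2⟩ | ⟨hi2, hj1⟩
      · right
        subst hi1; subst hj2
        simp only [phi]
        have h12 : (1 : ZMod n) - 2 = -1 := by ring
        rw [hval0, h12, val_neg_one n hn]
        rcases (by decide : ∀ g : GZ2, g = 1 ∨ g = aZ2) g with rfl | rfl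
        · rw [if_pos rfl, if_neg (by decide : ¬ (aZ2 * 1 = 1))]
          push_cast
          linear_combination -hnm - hcastn
        · rw [if_neg (by decide : ¬ (aZ2 = 1)), if_pos (by decide : aZ2 * aZ2 = 1)]
          push_cast
          linear_combination -hnm
      · left
        subst hi2; subst hj1
        simp only [phi]
        have h12 : (1 : ZMod n) - 2 = -1 := by ring
        rw [hval0, h12, val_neg_one n hn]
        rcases (by decide : ∀ g : GZ2, g = 1 ∨ g = aZ2) g with rfl | rfl
        · rw [if_pos rfl, if_neg (by decide : ¬ (aZ2 * 1 = 1))]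
          push_cast
          linear_combination -hnm
        · rw [if_neg (by decide : ¬ (aZ2 = 1)), if_pos (by decide : aZ2 * aZ2 = 1)]
          push_cast
          linear_combination -hnm - hcastn
    · exact absurd hmem (Set.notMem_empty _)

lemma phi_one_sub (n : ℕ) (hn : 3 ≤ n) (t : ℕ) (ht : t < n) :
    phi n (1, 1 - (t : ZMod n)) = ((t : ℕ) : ZMod (2*n)) := by
  haveI : NeZero n := ⟨by omega⟩
  simp only [phi, if_pos rfl]
  have h1 : (1 : ZMod n) - (1 - (t : ZMod n)) = (t : ZMod n) := by ring
  rw [h1, ZMod.val_cast_of_lt ht]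
  push_cast; ring

lemma phi_a1 (n : ℕ) (hn : 3 ≤ n) : phi n (aZ2, 1) = ((n : ℕ) : ZMod (2*n)) := by
  haveI : NeZero n := ⟨by omega⟩
  simp only [phi, if_neg (by decide : ¬ (aZ2 = 1))]
  have h1 : (1 : ZMod n) - 1 = 0 := by ring
  rw [h1, ZMod.val_zero]
  push_cast; ring

lemma phi_12 (n : ℕ) (hn : 3 ≤ n) : phi n (1, 2) = ((n - 1 : ℕ) : ZMod (2*n)) := by
  haveI : NeZero n := ⟨by omega⟩
  have h2 : (2 : ZMod n) = 1 - ((n - 1 : ℕ) : ZMod n) := by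
    push_cast [Nat.cast_sub (by omega : 1 ≤ n)]
    simp; ring
  rw [h2, phi_one_sub n hn (n-1) (by omega)]

lemma phi_11 (n : ℕ) (hn : 3 ≤ n) : phi n (1, 1) = 0 := by
  have h1 : (1 : ZMod n) = 1 - ((0 : ℕ) : ZMod n) := by simp
  rw [h1, phi_one_sub n hn 0 (by omega)]
  simp


/-- in the digraph above there is a unique undirected path of length
`n-1` from `(1,1)` to `(1,2)`, namely `(1,1), (1,0), (1,n-1), …, (1,3), (1,2)`,
i.e. `k ↦ (1, 1 - k)`; and no undirected path of length `n-1` from `(1,2)` to `(a,1)`. -/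
theorem statement13 (n : ℕ) (hn : 3 ≤ n) :
    let Γ := nCay GZ2 n (T4 n)
    let q : Fin ((n - 1) + 1) → GZ2 × ZMod n := fun k => (1, 1 - (k.val : ZMod n))
    (IsUndirPath Γ q ∧ q 0 = (1, 1) ∧ q (Fin.last (n - 1)) = (1, 2)) ∧
    (∀ p : Fin ((n - 1) + 1) → GZ2 × ZMod n,
       IsUndirPath Γ p → p 0 = (1, 1) → p (Fin.last (n - 1)) = (1, 2) → p = q) ∧
    ¬ ∃ p : Fin ((n - 1) + 1) → GZ2 × ZMod n,
        IsUndirPath Γ p ∧ p 0 = (1, 2) ∧ p (Fin.last (n - 1)) = (aZ2, 1) := by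
  intro Γ q
  haveI : NeZero n := ⟨by omega⟩
  haveI : NeZero (2*n) := ⟨by omega⟩
  -- generic transfer of a path to the cycle ZMod (2n)
  have transfer : ∀ p : Fin ((n - 1) + 1) → GZ2 × ZMod n, IsUndirPath Γ p →
      (∀ j, phi n (p j) = phi n (p 0) + (j.val : ZMod (2*n))) ∨
      (∀ j, phi n (p j) = phi n (p 0) - (j.val : ZMod (2*n))) := by
    intro p hp
    have hinj : Function.Injective (fun j => phi n (p j)) :=
      (phi_inj n hn).comp hp.1
    have hstep : ∀ i : Fin (n-1), phi n (p i.succ) = phi n (p i.castSucc) + 1 ∨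
        phi n (p i.castSucc) = phi n (p i.succ) + 1 := by
      intro i
      rcases hp.2 i with h | h
      · exact adj_phi n hn _ _ h
      · exact (adj_phi n hn _ _ h).symm
    exact cycle_path (fun j => phi n (p j)) hinj hstep
  have hq0 : q 0 = (1, 1) := by
    show ((1 : GZ2), (1 : ZMod n) - ((0 : ℕ) : ZMod n)) = (1, 1)
    simp
  have hqlast : q (Fin.last (n - 1)) = (1, 2) := by
    show ((1 : GZ2), (1 : ZMod n) - (((Fin.last (n-1)).val : ℕ) : ZMod n)) = (1, 2)
    have : ((Fin.last (n-1)).val : ℕ) = n - 1 := Fin.val_last _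
    rw [this]
    have h2 : (1 : ZMod n) - ((n - 1 : ℕ) : ZMod n) = 2 := by
      push_cast [Nat.cast_sub (by omega : 1 ≤ n)]
      simp; ring
    rw [h2]
  have hqval : ∀ j : Fin ((n-1)+1), phi n (q j) = ((j.val : ℕ) : ZMod (2*n)) := by
    intro j
    exact phi_one_sub n hn j.val (by have := j.isLt; omega)
  refine ⟨⟨⟨?_, ?_⟩, hq0, hqlast⟩, ?_, ?_⟩
  · -- q injective
    intro a b hab
    have h2 : (1 : ZMod n) - (a.val : ZMod n) = 1 - (b.val : ZMod n) :=
      congrArg Prod.snd hab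
    have h3 : ((a.val : ℕ) : ZMod n) = ((b.val : ℕ) : ZMod n) := by
      linear_combination -h2
    have := congrArg ZMod.val h3
    rw [ZMod.val_cast_of_lt (by have := a.isLt; omega),
        ZMod.val_cast_of_lt (by have := b.isLt; omega)] at this
    exact Fin.ext this
  · -- q consecutive adjacency
    intro i
    right
    show (1 : GZ2) * 1⁻¹ ∈ T4 n (1 - ((i.succ.val : ℕ) : ZMod n))
      (1 - ((i.castSucc.val : ℕ) : ZMod n))
    have hv : ((i.succ.val : ℕ) : ZMod n) = ((i.castSucc.val : ℕ) : ZMod n) + 1 := by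
      rw [Fin.val_succ, Fin.coe_castSucc]
      push_cast; ring
    have hne : (1 : ZMod n) - ((i.succ.val : ℕ) : ZMod n) ≠ 1 := by
      intro h0
      have h1 : ((i.succ.val : ℕ) : ZMod n) = 0 := by linear_combination -h0
      have := congrArg ZMod.val h1
      rw [ZMod.val_cast_of_lt (by have := i.isLt; rw [Fin.val_succ]; omega),
        ZMod.val_zero] at this
      rw [Fin.val_succ] at this
      omega
    have hcond : (1 - ((i.castSucc.val : ℕ) : ZMod n)) =
        (1 - ((i.succ.val : ℕ) : ZMod n)) + 1 := by
      rw [hv]; ring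
    unfold T4
    rw [if_pos (Or.inl ⟨hcond, hne⟩)]
    simp
  · -- uniqueness
    intro p hp hp0 hplast
    rcases transfer p hp with hL | hR
    · funext j
      apply phi_inj n hn
      rw [hL j, hp0, phi_11 n hn, hqval j, zero_add]
    · exfalso
      have := hR (Fin.last (n-1))
      rw [hplast, hp0, phi_11 n hn, phi_12 n hn, Fin.val_last, zero_sub] at this
      -- cast (n-1) = - cast (n-1)
      have h2 : (((n-1) + (n-1) : ℕ) : ZMod (2*n)) = 0 := by
        push_cast
        linear_combination this
      rw [ZMod.natCast_eq_zero_iff] at h2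
      have := Nat.le_of_dvd (by omega) h2
      omega
  · -- no path from (1,2) to (aZ2,1)
    rintro ⟨p, hp, hp0, hplast⟩
    have hlastval : phi n (p (Fin.last (n-1))) = ((n : ℕ) : ZMod (2*n)) := by
      rw [hplast]; exact phi_a1 n hn
    rcases transfer p hp with hL | hR
    · have := hL (Fin.last (n-1))
      rw [hlastval, hp0, phi_12 n hn, Fin.val_last] at this
      have h2 : ((n : ℕ) : ZMod (2*n)) = (((n-1) + (n-1) : ℕ) : ZMod (2*n)) := by
        push_cast
        linear_combination this
      have := congrArg ZMod.val h2
      rw [ZMod.val_cast_of_lt (by omega), ZMod.val_cast_of_lt (by omega)] at this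
      omega
    · have := hR (Fin.last (n-1))
      rw [hlastval, hp0, phi_12 n hn, Fin.val_last, sub_self] at this
      have := congrArg ZMod.val this
      rw [ZMod.val_cast_of_lt (by omega), ZMod.val_zero] at this
      omega

end PDR
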